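/- Let t be the Thue-Morse sequence and t_m its m-fold running sum mod 2. Fix n ≥ 0, and for k ≥ 0 write q = ⌊k/2^{n+2}⌋ and r = k mod 2^{n+2}. Then: t_{2^n}[k] ≡ t[q] + t[r] (mod 2) if 0 ≤ r ≤ 2^n − 1; t_{2^n}[k] = 1 if 2^n ≤ r ≤ 2·2^n − 1; t_{2^n}[k] ≡ t[q] + t[r − 2·2^n] (mod 2) if 2·2^n ≤ r ≤ 3·2^n − 1; and t_{2^n}[k] = 0 if 3·2^n ≤ r ≤ 2^{n+2} − 1. -/

import Mathlib

/-- The Thue–Morse sequence: parity of the number of 1s in the binary representation. -/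
def t (k : ℕ) : ℕ := (Nat.digits 2 k).sum % 2

/-- `ts m` is the m-fold iterated running sum (mod 2) of the Thue–Morse sequence. -/
def ts : ℕ → ℕ → ℕ
  | 0, k => t k
  | m + 1, k => (∑ j ∈ Finset.range (k + 1), ts m j) % 2

lemma t_lt_two (k : ℕ) : t k < 2 := Nat.mod_lt _ (by norm_num)

lemma t_zero : t 0 = 0 := by simp [t]

lemma t_even (m : ℕ) : t (2 * m) = t m := by
  rcases Nat.eq_zero_or_pos m with h | h
  · subst h; rfl
  · unfold t
    rw [Nat.digits_def' (by norm_num : (1:ℕ) < 2) (by omega : 0 < 2 * m)]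
    have h1 : (2 * m) % 2 = 0 := by omega
    have h2 : (2 * m) / 2 = m := by omega
    rw [h1, h2, List.sum_cons, zero_add]

lemma t_odd (m : ℕ) : t (2 * m + 1) = (t m + 1) % 2 := by
  unfold t
  rw [Nat.digits_def' (by norm_num : (1:ℕ) < 2) (by omega : 0 < 2 * m + 1)]
  have h1 : (2 * m + 1) % 2 = 1 := by omega
  have h2 : (2 * m + 1) / 2 = m := by omega
  rw [h1, h2, List.sum_cons]
  omega

lemma t_split (n : ℕ) : ∀ m s : ℕ, s < 2 ^ n → t (m * 2 ^ n + s) = (t m + t s) % 2 := by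
  induction n with
  | zero =>
    intro m s hs
    have hs0 : s = 0 := by simpa using Nat.lt_one_iff.mp (by simpa using hs)
    subst hs0
    rw [pow_zero, mul_one, add_zero, t_zero, add_zero]
    exact (Nat.mod_eq_of_lt (t_lt_two m)).symm
  | succ n ih =>
    intro m s hs
    have hpow : 2 ^ (n + 1) = 2 * 2 ^ n := by ring
    rcases Nat.even_or_odd s with ⟨s', hs'⟩ | ⟨s', hs'⟩
    · have hslt : s' < 2 ^ n := by omega
      have h1 : m * 2 ^ (n + 1) + s = 2 * (m * 2 ^ n + s') := by rw [hs', pow_succ]; ring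
      have h2 : t s = t s' := by rw [show s = 2 * s' from by omega, t_even]
      rw [h1, t_even, ih m s' hslt, h2]
    · have hslt : s' < 2 ^ n := by omega
      have h1 : m * 2 ^ (n + 1) + s = 2 * (m * 2 ^ n + s') + 1 := by rw [hs', pow_succ]; ring
      have h2 : t s = (t s' + 1) % 2 := by rw [hs', t_odd]
      rw [h1, t_odd, ih m s' hslt, h2]
      have := t_lt_two m
      have := t_lt_two s'
      omega

/-- Running-sum-mod-2 operator. -/
def Sop (f : ℕ → ℕ) (k : ℕ) : ℕ := (∑ j ∈ Finset.range (k + 1), f j) % 2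

lemma ts_eq (m : ℕ) : ∀ k, ts m k = Sop^[m] t k := by
  induction m with
  | zero => intro k; rfl
  | succ m ih =>
    intro k
    show (∑ j ∈ Finset.range (k + 1), ts m j) % 2 = _
    rw [Function.iterate_succ_apply']
    unfold Sop
    congr 1
    exact Finset.sum_congr rfl fun j _ => ih j

lemma key (n : ℕ) : ∀ f : ℕ → ℕ,
    (∀ k, k < 2 ^ n → Sop^[2 ^ n] f k = f k % 2) ∧
    (∀ k, 2 ^ n ≤ k → Sop^[2 ^ n] f k = (f k + Sop^[2 ^ n] f (k - 2 ^ n)) % 2) := by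
  induction n with
  | zero =>
    intro f
    simp only [pow_zero, Function.iterate_one]
    constructor
    · intro k hk
      have hk0 : k = 0 := by omega
      subst hk0
      simp [Sop]
    · intro k hk
      have h1 : k - 1 + 1 = k := by omega
      have e1 : Sop f k = (∑ j ∈ Finset.range k, f j + f k) % 2 := by
        unfold Sop; rw [Finset.sum_range_succ]
      have e2 : Sop f (k - 1) = (∑ j ∈ Finset.range k, f j) % 2 := by
        unfold Sop; rw [h1]
      omega
  | succ n ih =>
    intro f
    obtain ⟨hg1, hg2⟩ := ih f
    obtain ⟨hh1, hh2⟩ := ih (Sop^[2 ^ n] f)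
    have h2 : 2 ^ (n + 1) = 2 ^ n + 2 ^ n := by ring
    have hcomp : ∀ k, Sop^[2 ^ (n + 1)] f k = Sop^[2 ^ n] (Sop^[2 ^ n] f) k := by
      intro k; rw [h2, Function.iterate_add_apply]
    constructor
    · intro k hk
      rw [hcomp]
      by_cases hkp : k < 2 ^ n
      · have e1 := hh1 k hkp
        have e2 := hg1 k hkp
        omega
      · push_neg at hkp
        have e1 := hh2 k hkp
        have e2 := hh1 (k - 2 ^ n) (by omega)
        have e3 := hg2 k hkp
        have e4 := hg1 (k - 2 ^ n) (by omega)
        omega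
    · intro k hk
      rw [hcomp, hcomp]
      have hp : 2 ^ n ≤ k := by omega
      have e1 := hh2 k hp
      have e2 := hh2 (k - 2 ^ n) (by omega)
      have e3 := hg2 k hp
      have e5 : k - 2 ^ n - 2 ^ n = k - 2 ^ (n + 1) := by omega
      rw [e5] at e2
      omega

lemma ts_rec (n : ℕ) :
    (∀ k, k < 2 ^ n → ts (2 ^ n) k = t k) ∧
    (∀ k, 2 ^ n ≤ k → ts (2 ^ n) k = (t k + ts (2 ^ n) (k - 2 ^ n)) % 2) := by
  obtain ⟨h1, h2⟩ := key n t
  have ht : ∀ k, t k % 2 = t k := fun k => Nat.mod_eq_of_lt (t_lt_two k)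
  constructor
  · intro k hk; rw [ts_eq (2 ^ n) k, h1 k hk, ht]
  · intro k hk; rw [ts_eq (2 ^ n) k, ts_eq (2 ^ n) (k - 2 ^ n), h2 k hk]

lemma g_val (n : ℕ) : ∀ k, ts (2 ^ n) k =
    if k % (4 * 2 ^ n) < 2 ^ n then (t (k / (4 * 2 ^ n)) + t (k % (4 * 2 ^ n))) % 2
    else if k % (4 * 2 ^ n) < 2 * 2 ^ n then 1
    else if k % (4 * 2 ^ n) < 3 * 2 ^ n then
      (t (k / (4 * 2 ^ n)) + t (k % (4 * 2 ^ n) - 2 * 2 ^ n)) % 2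
    else 0 := by
  obtain ⟨hts1, hts2⟩ := ts_rec n
  have hP : 0 < 2 ^ n := pow_pos (by norm_num) n
  intro k
  induction k using Nat.strong_induction_on with
  | _ k ih =>
  by_cases hk : k < 2 ^ n
  · have hq : k / (4 * 2 ^ n) = 0 := Nat.div_eq_of_lt (by omega)
    have hr : k % (4 * 2 ^ n) = k := Nat.mod_eq_of_lt (by omega)
    rw [hts1 k hk, hq, hr, if_pos hk, t_zero, zero_add]
    exact (Nat.mod_eq_of_lt (t_lt_two k)).symm
  · push_neg at hk
    have hqdef : k / (4 * 2 ^ n) = k / (4 * 2 ^ n) := rfl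
    obtain ⟨q, hqdef⟩ : ∃ q, k / (4 * 2 ^ n) = q := ⟨_, rfl⟩
    obtain ⟨r, hrdef⟩ : ∃ r, k % (4 * 2 ^ n) = r := ⟨_, rfl⟩
    have hkqr : 4 * 2 ^ n * q + r = k := by
      rw [← hqdef, ← hrdef]; exact Nat.div_add_mod k (4 * 2 ^ n)
    have hr4 : r < 4 * 2 ^ n := by rw [← hrdef]; exact Nat.mod_lt _ (by omega)
    obtain ⟨c, hcdef⟩ : ∃ c, r / 2 ^ n = c := ⟨_, rfl⟩
    obtain ⟨s, hsdef⟩ : ∃ s, r % 2 ^ n = s := ⟨_, rfl⟩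
    have hrcs : 2 ^ n * c + s = r := by
      rw [← hcdef, ← hsdef]; exact Nat.div_add_mod r (2 ^ n)
    have hs : s < 2 ^ n := by rw [← hsdef]; exact Nat.mod_lt _ hP
    have hc : c < 4 := by
      rw [← hcdef]; exact Nat.div_lt_of_lt_mul (by omega)
    have hrec := hts2 k hk
    have btq := t_lt_two q
    have bts := t_lt_two s
    have btk := t_lt_two k
    rw [hqdef, hrdef]
    have hc4 : c = 0 ∨ c = 1 ∨ c = 2 ∨ c = 3 := by omega
    rcases hc4 with hc0 | hc0 | hc0 | hc0 <;> rw [hc0] at hrcs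
    · -- c = 0 : r = s < 2^n, q ≥ 1
      have hq1 : 1 ≤ q := by
        rcases Nat.eq_zero_or_pos q with h | h
        · rw [h] at hkqr; omega
        · exact h
      obtain ⟨q', rfl⟩ : ∃ q', q = q' + 1 := ⟨q - 1, by omega⟩
      have hB : 4 * 2 ^ n * (q' + 1) = 4 * 2 ^ n * q' + 4 * 2 ^ n := by ring
      have h1 : k - 2 ^ n = 4 * 2 ^ n * q' + (3 * 2 ^ n + s) := by omega
      have hm : (k - 2 ^ n) % (4 * 2 ^ n) = 3 * 2 ^ n + s := by
        rw [h1, Nat.mul_add_mod, Nat.mod_eq_of_lt (by omega)]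
      have hih := ih (k - 2 ^ n) (by omega)
      rw [hm, if_neg (by omega), if_neg (by omega), if_neg (by omega)] at hih
      have hmul : (4 * (q' + 1) + 0) * 2 ^ n = 4 * 2 ^ n * (q' + 1) + 2 ^ n * 0 := by ring
      have hksplit : t k = (t (4 * (q' + 1) + 0) + t s) % 2 := by
        rw [show k = (4 * (q' + 1) + 0) * 2 ^ n + s from by omega]
        exact t_split n _ s hs
      have htq : t (4 * (q' + 1) + 0) = t (q' + 1) := by
        rw [show 4 * (q' + 1) + 0 = 2 * (2 * (q' + 1)) from by ring, t_even, t_even]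
      rw [if_pos (show r < 2 ^ n from by omega), show r = s from by omega]
      omega
    · -- c = 1
      have h1 : k - 2 ^ n = 4 * 2 ^ n * q + s := by omega
      have hd : (k - 2 ^ n) / (4 * 2 ^ n) = q := by
        rw [h1, Nat.mul_add_div (by omega), Nat.div_eq_of_lt (by omega : s < 4 * 2 ^ n),
          Nat.add_zero]
      have hm : (k - 2 ^ n) % (4 * 2 ^ n) = s := by
        rw [h1, Nat.mul_add_mod, Nat.mod_eq_of_lt (by omega)]
      have hih := ih (k - 2 ^ n) (by omega)
      rw [hd, hm, if_pos hs] at hih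
      have hmul : (4 * q + 1) * 2 ^ n = 4 * 2 ^ n * q + 2 ^ n * 1 := by ring
      have hksplit : t k = (t (4 * q + 1) + t s) % 2 := by
        rw [show k = (4 * q + 1) * 2 ^ n + s from by omega]
        exact t_split n _ s hs
      have htq : t (4 * q + 1) = (t q + 1) % 2 := by
        rw [show 4 * q + 1 = 2 * (2 * q) + 1 from by ring, t_odd, t_even]
      rw [if_neg (by omega), if_pos (show r < 2 * 2 ^ n from by omega)]
      omega
    · -- c = 2
      have h1 : k - 2 ^ n = 4 * 2 ^ n * q + (2 ^ n + s) := by omega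
      have hm : (k - 2 ^ n) % (4 * 2 ^ n) = 2 ^ n + s := by
        rw [h1, Nat.mul_add_mod, Nat.mod_eq_of_lt (by omega)]
      have hih := ih (k - 2 ^ n) (by omega)
      rw [hm, if_neg (by omega), if_pos (by omega)] at hih
      have hmul : (4 * q + 2) * 2 ^ n = 4 * 2 ^ n * q + 2 ^ n * 2 := by ring
      have hksplit : t k = (t (4 * q + 2) + t s) % 2 := by
        rw [show k = (4 * q + 2) * 2 ^ n + s from by omega]
        exact t_split n _ s hs
      have htq : t (4 * q + 2) = (t q + 1) % 2 := by
        rw [show 4 * q + 2 = 2 * (2 * q + 1) from by ring, t_even, t_odd]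
      rw [if_neg (by omega), if_neg (by omega), if_pos (show r < 3 * 2 ^ n from by omega),
        show r - 2 * 2 ^ n = s from by omega]
      omega
    · -- c = 3
      have h1 : k - 2 ^ n = 4 * 2 ^ n * q + (2 * 2 ^ n + s) := by omega
      have hd : (k - 2 ^ n) / (4 * 2 ^ n) = q := by
        rw [h1, Nat.mul_add_div (by omega),
          Nat.div_eq_of_lt (by omega : 2 * 2 ^ n + s < 4 * 2 ^ n), Nat.add_zero]
      have hm : (k - 2 ^ n) % (4 * 2 ^ n) = 2 * 2 ^ n + s := by
        rw [h1, Nat.mul_add_mod, Nat.mod_eq_of_lt (by omega)]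
      have hih := ih (k - 2 ^ n) (by omega)
      rw [hd, hm, if_neg (by omega), if_neg (by omega), if_pos (by omega),
        show 2 * 2 ^ n + s - 2 * 2 ^ n = s from by omega] at hih
      have hmul : (4 * q + 3) * 2 ^ n = 4 * 2 ^ n * q + 2 ^ n * 3 := by ring
      have hksplit : t k = (t (4 * q + 3) + t s) % 2 := by
        rw [show k = (4 * q + 3) * 2 ^ n + s from by omega]
        exact t_split n _ s hs
      have htq : t (4 * q + 3) = ((t q + 1) % 2 + 1) % 2 := by
        rw [show 4 * q + 3 = 2 * (2 * q + 1) + 1 from by ring, t_odd, t_odd]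
      rw [if_neg (by omega), if_neg (by omega), if_neg (by omega)]
      omega

theorem tm_pow2sum_explicit (n k : ℕ) :
    (k % 2 ^ (n + 2) ≤ 2 ^ n - 1 →
      ts (2 ^ n) k ≡ t (k / 2 ^ (n + 2)) + t (k % 2 ^ (n + 2)) [MOD 2]) ∧
    (2 ^ n ≤ k % 2 ^ (n + 2) → k % 2 ^ (n + 2) ≤ 2 * 2 ^ n - 1 →
      ts (2 ^ n) k = 1) ∧
    (2 * 2 ^ n ≤ k % 2 ^ (n + 2) → k % 2 ^ (n + 2) ≤ 3 * 2 ^ n - 1 →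
      ts (2 ^ n) k ≡ t (k / 2 ^ (n + 2)) + t (k % 2 ^ (n + 2) - 2 * 2 ^ n) [MOD 2]) ∧
    (3 * 2 ^ n ≤ k % 2 ^ (n + 2) → k % 2 ^ (n + 2) ≤ 2 ^ (n + 2) - 1 →
      ts (2 ^ n) k = 0) := by
  have h4 : 2 ^ (n + 2) = 4 * 2 ^ n := by ring
  have hP : 0 < 2 ^ n := pow_pos (by norm_num) n
  have hv := g_val n k
  refine ⟨?_, ?_, ?_, ?_⟩
  · intro h
    rw [h4] at h ⊢
    rw [if_pos (show k % (4 * 2 ^ n) < 2 ^ n from by omega)] at hv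
    show ts (2 ^ n) k % 2 = _ % 2
    omega
  · intro h1 h2
    rw [h4] at h1 h2
    rw [if_neg (by omega), if_pos (show k % (4 * 2 ^ n) < 2 * 2 ^ n from by omega)] at hv
    exact hv
  · intro h1 h2
    rw [h4] at h1 h2 ⊢
    rw [if_neg (by omega), if_neg (by omega),
      if_pos (show k % (4 * 2 ^ n) < 3 * 2 ^ n from by omega)] at hv
    show ts (2 ^ n) k % 2 = _ % 2
    omega
  · intro h1 h2
    rw [h4] at h1 h2
    have hlt : k % (4 * 2 ^ n) < 4 * 2 ^ n := Nat.mod_lt _ (by omega)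
    rw [if_neg (by omega), if_neg (by omega), if_neg (by omega)] at hv
    exact hv
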